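/- Let M be a finite free module over ℂ⟦h⟧ and let σ : M → M be a q-conjugation on M, i.e. an additive involutive map satisfying σ(c • m) = (∼c) • σ(m) for all c ∈ ℂ⟦h⟧ and m ∈ M, and σ(m) − m ∈ h • M for all m ∈ M. Then there exists a ℂ⟦h⟧-basis (b_i) of M with σ(b_i) = b_i for all i. -/

import Mathlib

open PowerSeries


/-- Let `M` be a finite free module over `ℂ⟦h⟧` and let `σ : M → M` be a
q-conjugation on `M`, i.e. an additive involutive map satisfying
`σ (c • m) = (rescale (-1) c) • σ m` (semilinearity with respect to the q-conjugation
`∼ = rescale (-1)` on `ℂ⟦h⟧`) and `σ m - m ∈ h • M` for all `m`.  Then there exists a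
`ℂ⟦h⟧`-basis `(b i)` of `M` with `σ (b i) = b i` for all `i`. -/
theorem qConjugation_invariant_basis_exists
    (M : Type) [AddCommGroup M] [Module (PowerSeries ℂ) M]
    [Module.Free (PowerSeries ℂ) M] [Module.Finite (PowerSeries ℂ) M]
    (σ : M → M)
    (hadd : ∀ m m' : M, σ (m + m') = σ m + σ m')
    (hsmul : ∀ (c : PowerSeries ℂ) (m : M), σ (c • m) = (PowerSeries.rescale (-1 : ℂ) c) • σ m)
    (hinv : ∀ m : M, σ (σ m) = m)
    (hmod : ∀ m : M, ∃ m' : M, σ m - m = (PowerSeries.X : PowerSeries ℂ) • m') :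
    ∃ (ι : Type) (_ : Fintype ι) (b : Module.Basis ι (PowerSeries ℂ) M), ∀ i : ι, σ (b i) = b i := by
  classical
  set R := PowerSeries ℂ
  -- rescale fixes constants
  have hresC : ∀ c : ℂ, rescale (-1 : ℂ) (C c) = C c := by
    intro c
    ext n
    rw [coeff_rescale]
    rcases Nat.eq_zero_or_pos n with h | h
    · simp [h]
    · simp [PowerSeries.coeff_C, Nat.pos_iff_ne_zero.mp h]
  set e : Module.Basis (Module.Free.ChooseBasisIndex R M) R M := Module.Free.chooseBasis R M
  set ι := Module.Free.ChooseBasisIndex R M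
  set f : ι → M := fun i => (C (1/2 : ℂ)) • (e i + σ (e i)) with hf
  -- σ fixes f
  have hσf : ∀ i, σ (f i) = f i := by
    intro i
    rw [hf]
    simp only [hsmul, hadd, hinv, hresC]
    rw [add_comm (σ (e i))]
  -- f i = e i + X • something
  have hfe : ∀ i, ∃ n : M, f i = e i + (X : R) • n := by
    intro i
    obtain ⟨m', hm'⟩ := hmod (e i)
    refine ⟨(C (1/2 : ℂ)) • m', ?_⟩
    have h2 : (C (1/2 : ℂ)) + (C (1/2 : ℂ)) = (1 : R) := by
      rw [← map_add]; norm_num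
    rw [hf]
    calc (C (1/2 : ℂ)) • (e i + σ (e i))
        = (C (1/2 : ℂ)) • (e i + (e i + (X : R) • m')) := by
          rw [← hm']; abel_nf
      _ = e i + (X : R) • ((C (1/2 : ℂ)) • m') := by
          rw [smul_add, smul_add, smul_comm, ← add_assoc, ← add_smul, h2, one_smul]
  set φ : M →ₗ[R] M := e.constr ℕ f with hφ
  have hφe : ∀ i, φ (e i) = f i := fun i => e.constr_basis ℕ f i
  set A := LinearMap.toMatrix e e φ with hA
  have hAcc : A.map (constantCoeff) = 1 := by
    ext i j
    rw [Matrix.map_apply, hA, LinearMap.toMatrix_apply, hφe]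
    obtain ⟨n, hn⟩ := hfe j
    rw [hn, map_add, map_smul]
    simp only [Finsupp.add_apply, Finsupp.smul_apply, smul_eq_mul, map_add, map_mul,
      PowerSeries.constantCoeff_X, zero_mul, add_zero, Module.Basis.repr_self]
    rw [Finsupp.single_apply, Matrix.one_apply]
    by_cases h : i = j
    · simp [h]
    · rw [if_neg (fun hh => h hh.symm), if_neg h, map_zero]
  have hdet : IsUnit A.det := by
    rw [PowerSeries.isUnit_iff_constantCoeff, RingHom.map_det, RingHom.mapMatrix_apply, hAcc, Matrix.det_one]
    exact isUnit_one
  let eq : M ≃ₗ[R] M := LinearEquiv.ofIsUnitDet hdet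
  refine ⟨ι, inferInstance, e.map eq, fun i => ?_⟩
  have : (e.map eq) i = f i := by
    simp only [Module.Basis.map_apply]
    have := LinearEquiv.coe_ofIsUnitDet hdet
    calc eq (e i) = φ (e i) := by rw [← this]; rfl
      _ = f i := hφe i
  rw [this, hσf]
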